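/- If (V, ‖·‖) is a two-dimensional real normed space, then every horofunction of (V, ‖·‖) is a Busemann point. -/

import Mathlib

open Filter Topology Set

set_option linter.unusedSectionVars false
set_option linter.unusedVariables false
set_option maxHeartbeats 1000000

noncomputable section

variable {V : Type*} [NormedAddCommGroup V] [NormedSpace ℝ V]

/-- `φ_z(x) = ‖z − x‖ − ‖z‖`. -/
def phi (z : V) : V → ℝ := fun x => ‖z - x‖ - ‖z‖

/-- A horofunction: a limit, uniformly on compact sets, of functions `φ_{z_n}`,
which is not itself of the form `φ_z`. -/
def IsHorofunction (h : V → ℝ) : Prop :=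
  (∃ z : ℕ → V, ∀ K : Set V, IsCompact K →
      TendstoUniformlyOn (fun n x => phi (z n) x) h atTop K) ∧
  ∀ z : V, h ≠ phi z

/-- An almost-geodesic: a map `γ` defined on an unbounded subset `T` of `[0,∞)`
containing `0` such that for every `ε > 0`,
`|‖γ(t) − γ(s)‖ + ‖γ(s) − γ(0)‖ − t| < ε` for all sufficiently large `s ≤ t` in `T`. -/
def IsAlmostGeodesic (T : Set ℝ) (γ : ℝ → V) : Prop :=
  T ⊆ Set.Ici (0 : ℝ) ∧ (0 : ℝ) ∈ T ∧ ¬ BddAbove T ∧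
  ∀ ε > (0 : ℝ), ∃ M : ℝ, ∀ s ∈ T, ∀ t ∈ T, M ≤ s → s ≤ t →
    |‖γ t - γ s‖ + ‖γ s - γ 0‖ - t| < ε

/-- A Busemann point: a horofunction which is the limit, uniformly on compact sets,
of `φ_{γ(t)}` along an almost-geodesic `γ`. -/
def IsBusemannPoint (h : V → ℝ) : Prop :=
  IsHorofunction h ∧
  ∃ (T : Set ℝ) (γ : ℝ → V), IsAlmostGeodesic T γ ∧
    ∀ K : Set V, IsCompact K → ∀ ε > (0 : ℝ), ∃ M : ℝ, ∀ t ∈ T, M ≤ t →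
      ∀ x ∈ K, |phi (γ t) x - h x| < ε

lemma phi_lip (w x y : V) : |phi w x - phi w y| ≤ ‖x - y‖ := by
  have h := abs_norm_sub_norm_le (w - x) (w - y)
  have : w - x - (w - y) = y - x := by abel
  rw [this] at h
  simpa [phi, norm_sub_rev y x] using h

lemma phi_dist2 (w w' x : V) : |phi w x - phi w' x| ≤ 2 * ‖w - w'‖ := by
  have h1 := abs_norm_sub_norm_le (w - x) (w' - x)
  have e1 : w - x - (w' - x) = w - w' := by abel
  rw [e1] at h1
  have h2 := abs_norm_sub_norm_le w w'
  have : phi w x - phi w' x = (‖w - x‖ - ‖w' - x‖) - (‖w‖ - ‖w'‖) := by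
    simp [phi]; ring
  rw [this]
  calc |(‖w - x‖ - ‖w' - x‖) - (‖w‖ - ‖w'‖)| ≤ |‖w - x‖ - ‖w' - x‖| + |‖w‖ - ‖w'‖| :=
        abs_sub _ _
    _ ≤ ‖w - w'‖ + ‖w - w'‖ := add_le_add h1 h2
    _ = 2 * ‖w - w'‖ := by ring

/-- pointwise convergence of equi-Lipschitz functions is uniform on compacts. -/
lemma lemmaU {F : ℕ → V → ℝ} {h : V → ℝ}
    (hF : ∀ k x y, |F k x - F k y| ≤ ‖x - y‖)
    (hhl : ∀ x y, |h x - h y| ≤ ‖x - y‖)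
    (hc : ∀ x, Tendsto (fun k => F k x) atTop (𝓝 (h x)))
    {K : Set V} (hK : IsCompact K) {ε : ℝ} (hε : 0 < ε) :
    ∃ N : ℕ, ∀ k ≥ N, ∀ x ∈ K, |F k x - h x| < ε := by
  obtain ⟨s, hsK, hcov⟩ := hK.elim_nhds_subcover (fun x => Metric.ball x (ε/4))
    (fun x _ => Metric.ball_mem_nhds x (by positivity))
  have hev : ∀ᶠ k in atTop, ∀ c ∈ s, |F k c - h c| < ε / 4 := by
    refine (Filter.eventually_all_finset s).2 fun c _ => ?_
    have := (hc c).eventually (eventually_abs_sub_lt (h c) (by positivity : (0:ℝ) < ε/4))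
    simpa [abs_sub_comm] using this
  obtain ⟨N, hN⟩ := hev.exists_forall_of_atTop
  refine ⟨N, fun k hk x hx => ?_⟩
  obtain ⟨c, hcs, hxc⟩ := Set.mem_iUnion₂.1 (hcov hx)
  have hxc' : ‖x - c‖ < ε/4 := by
    rw [← dist_eq_norm]; exact Metric.mem_ball.1 hxc
  have h1 : |F k x - F k c| ≤ ‖x - c‖ := hF k x c
  have h2 : |F k c - h c| < ε/4 := hN k hk c hcs
  have h3 : |h c - h x| ≤ ‖c - x‖ := hhl c x
  have : |F k x - h x| ≤ |F k x - F k c| + |F k c - h c| + |h c - h x| := by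
    calc |F k x - h x| ≤ |F k x - F k c| + |F k c - h x| := abs_sub_le _ _ _
      _ ≤ |F k x - F k c| + (|F k c - h c| + |h c - h x|) := by
          have := abs_sub_le (F k c) (h c) (h x); linarith
      _ = _ := by ring
  have hcx : ‖c - x‖ < ε/4 := by rwa [norm_sub_rev]
  linarith

lemma exists_extraction (a : ℕ → ℝ) (ha : Tendsto a atTop atTop) (c₀ C : ℝ) :
    ∃ ψ : ℕ → ℕ, StrictMono ψ ∧ c₀ ≤ a (ψ 0) ∧ ∀ k, a (ψ k) + C ≤ a (ψ (k + 1)) := by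
  have hstep : ∀ m : ℕ, ∃ n, m < n ∧ a m + C ≤ a n := by
    intro m
    obtain ⟨n, hn⟩ := ((ha.eventually (eventually_ge_atTop (a m + C))).and
      (eventually_gt_atTop m)).exists
    exact ⟨n, hn.2, hn.1⟩
  obtain ⟨n₀, hn₀⟩ := (ha.eventually (eventually_ge_atTop c₀)).exists
  refine ⟨fun k => Nat.rec n₀ (fun _ nk => (hstep nk).choose) k, ?_, hn₀, ?_⟩
  · apply strictMono_nat_of_lt_succ
    intro k
    exact (hstep _).choose_spec.1
  · intro k
    exact (hstep _).choose_spec.2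

/-- Packaging: a discrete almost-geodesic from a sequence of points. -/
lemma discreteT (h : V → ℝ) (y : ℕ → V) (t : ℕ → ℝ)
    (ht : ∀ k, t k = ‖y k‖) (htm : StrictMono t) (ht1 : ∀ k, 1 ≤ t k)
    (htk : ∀ k : ℕ, (k : ℝ) ≤ t k)
    (hdef : ∀ ε > (0:ℝ), ∃ K : ℕ, ∀ k l : ℕ, K ≤ k → k ≤ l →
      |‖y l - y k‖ + ‖y k‖ - t l| < ε)
    (hconv : ∀ Ks : Set V, IsCompact Ks → ∀ ε > (0:ℝ), ∃ N : ℕ, ∀ k, N ≤ k →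
      ∀ x ∈ Ks, |phi (y k) x - h x| < ε) :
    ∃ (T : Set ℝ) (γ : ℝ → V), IsAlmostGeodesic T γ ∧
      ∀ K : Set V, IsCompact K → ∀ ε > (0 : ℝ), ∃ M : ℝ, ∀ s ∈ T, M ≤ s →
        ∀ x ∈ K, |phi (γ s) x - h x| < ε := by
  classical
  set γ : ℝ → V := fun s => if hs : ∃ k, t k = s then y hs.choose else 0 with hγdef
  have hγt : ∀ k, γ (t k) = y k := by
    intro k
    have hex : ∃ j, t j = t k := ⟨k, rfl⟩
    simp only [hγdef, dif_pos hex]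
    congr 1
    exact htm.injective hex.choose_spec
  have hγ0 : γ 0 = 0 := by
    have hne : ¬ ∃ j, t j = (0:ℝ) := by
      rintro ⟨j, hj⟩
      linarith [ht1 j]
    simp only [hγdef, dif_neg hne]
  refine ⟨insert (0:ℝ) (Set.range t), γ, ⟨?_, Set.mem_insert _ _, ?_, ?_⟩, ?_⟩
  · rintro s (rfl | ⟨k, rfl⟩)
    · exact Set.mem_Ici.2 le_rfl
    · exact Set.mem_Ici.2 (by linarith [ht1 k])
  · rintro ⟨B, hB⟩
    have h1 : t (⌈B⌉₊ + 1) ≤ B := hB (Set.mem_insert_of_mem _ ⟨_, rfl⟩)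
    have h2 : ((⌈B⌉₊ + 1 : ℕ) : ℝ) ≤ t (⌈B⌉₊ + 1) := htk (⌈B⌉₊ + 1)
    have h3 : B ≤ (⌈B⌉₊ : ℝ) := Nat.le_ceil B
    push_cast at h2
    linarith
  · intro ε hε
    obtain ⟨K, hK⟩ := hdef ε hε
    refine ⟨t K, ?_⟩
    rintro s (rfl | ⟨k, rfl⟩) t' ht' hMs hst
    · exfalso; linarith [ht1 K]
    rcases ht' with rfl | ⟨l, rfl⟩
    · exfalso; linarith [ht1 K, ht1 k]
    have hkl : k ≤ l := (htm.le_iff_le).1 hst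
    have hKk : K ≤ k := (htm.le_iff_le).1 hMs
    rw [hγt, hγt, hγ0, sub_zero]
    exact hK k l hKk hkl
  · intro K hK ε hε
    obtain ⟨N, hN⟩ := hconv K hK ε hε
    refine ⟨t N, ?_⟩
    rintro s (rfl | ⟨k, rfl⟩) hMs x hx
    · exfalso; linarith [ht1 N]
    have hNk : N ≤ k := (htm.le_iff_le).1 hMs
    rw [hγt]
    exact hN k hNk x hx

lemma slope_bound (φ : ℝ → ℝ) (hc : ConvexOn ℝ univ φ) (h0 : ∀ τ, 0 ≤ φ τ)
    {ρ : ℝ} (hρ : 0 < ρ) : |φ 1 - φ 0| ≤ (φ (1 + ρ) + φ (-ρ)) / ρ := by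
  have h1 : (φ 1 - φ 0) / (1 - 0) ≤ (φ (1 + ρ) - φ 1) / ((1 + ρ) - 1) :=
    hc.slope_mono_adjacent (mem_univ _) (mem_univ _) (by norm_num) (by linarith)
  have h2 : (φ 0 - φ (-ρ)) / (0 - (-ρ)) ≤ (φ 1 - φ 0) / (1 - 0) :=
    hc.slope_mono_adjacent (mem_univ _) (mem_univ _) (by linarith) (by norm_num)
  simp only [sub_zero, div_one, sub_neg_eq_add, add_sub_cancel_left, zero_add] at h1 h2
  rw [le_div_iff₀ hρ] at h1
  rw [div_le_iff₀ hρ] at h2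
  rw [le_div_iff₀ hρ]
  rcases abs_cases (φ 1 - φ 0) with ⟨he, _⟩ | ⟨he, _⟩ <;> rw [he] <;>
    nlinarith [h0 1, h0 0, h0 (1 + ρ), h0 (-ρ), hρ.le]

lemma exists_fplus [FiniteDimensional ℝ V] (u v : V) (hu : ‖u‖ = 1) :
    ∃ fp : StrongDual ℝ V, ‖fp‖ ≤ 1 ∧ fp u = 1 ∧
      ∀ f : StrongDual ℝ V, ‖f‖ ≤ 1 → f u = 1 → f v ≤ fp v := by
  have hu0 : u ≠ 0 := by intro h; rw [h, norm_zero] at hu; norm_num at hu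
  set F : Set (StrongDual ℝ V) := {f | ‖f‖ ≤ 1 ∧ f u = 1} with hF
  have hFne : F.Nonempty := by
    obtain ⟨g, hg1, hgu⟩ := exists_dual_vector ℝ u (norm_ne_zero_iff.2 hu0)
    exact ⟨g, le_of_eq hg1, by rw [hgu, hu]; exact_mod_cast rfl⟩
  have hFc : IsCompact F := by
    have hclosed : IsClosed F := by
      apply IsClosed.inter
      · exact isClosed_le (continuous_norm) continuous_const
      · exact isClosed_eq ((ContinuousLinearMap.apply ℝ ℝ u).continuous) continuous_const
    have hbdd : F ⊆ Metric.closedBall 0 1 := by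
      intro f hf
      simpa [Metric.mem_closedBall, dist_zero_right] using hf.1
    exact (isCompact_closedBall (0 : StrongDual ℝ V) 1).of_isClosed_subset hclosed hbdd
  obtain ⟨fp, hfpF, hfpmax⟩ := hFc.exists_isMaxOn hFne
    ((ContinuousLinearMap.apply ℝ ℝ v).continuous.continuousOn)
  exact ⟨fp, hfpF.1, hfpF.2, fun f hf1 hfu => hfpmax ⟨hf1, hfu⟩⟩

lemma lemA0 [FiniteDimensional ℝ V] (u v : V) (hu : ‖u‖ = 1)
    (fp : StrongDual ℝ V) (hfp1 : ‖fp‖ ≤ 1) (hfpu : fp u = 1)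
    (hmax : ∀ f : StrongDual ℝ V, ‖f‖ ≤ 1 → f u = 1 → f v ≤ fp v)
    {ε : ℝ} (hε : 0 < ε) :
    ∃ σ : ℝ, 0 < σ ∧ ‖u + σ • v‖ - fp (u + σ • v) ≤ ε * σ := by
  by_contra hcon
  push_neg at hcon
  set δ : ℝ := 1 / (‖v‖ + 1) with hδ
  have hδ0 : 0 < δ := by positivity
  set σ : ℕ → ℝ := fun j => δ / (j + 1) with hσ
  have hσ0 : ∀ j, 0 < σ j := by
    intro j; apply div_pos hδ0; positivity
  have hσle : ∀ j, σ j ≤ δ := by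
    intro j
    rw [hσ]
    apply div_le_self hδ0.le
    simp
  have hσto : Tendsto σ atTop (𝓝 0) := by
    rw [hσ]
    simpa using tendsto_const_nhds.div_atTop
      (tendsto_atTop_add_const_right atTop (1:ℝ) tendsto_natCast_atTop_atTop)
  have hne : ∀ j, u + σ j • v ≠ 0 := by
    intro j h
    have h1 : ‖u‖ = ‖σ j • v‖ := by
      have : u = -(σ j • v) := by linear_combination (norm := module) h
      rw [this, norm_neg]
    rw [hu, norm_smul, Real.norm_eq_abs, abs_of_pos (hσ0 j)] at h1
    have : σ j * ‖v‖ ≤ δ * ‖v‖ := by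
      apply mul_le_mul_of_nonneg_right (hσle j) (norm_nonneg v)
    have hlt : δ * ‖v‖ < 1 := by
      rw [hδ]
      rw [div_mul_eq_mul_div, one_mul, div_lt_one (by positivity)]
      linarith
    linarith
  choose f hf1 hfval0 using fun j => exists_dual_vector ℝ (u + σ j • v) (norm_ne_zero_iff.2 (hne j))
  have hfval : ∀ j, f j (u + σ j • v) = ‖u + σ j • v‖ := fun j => by exact_mod_cast hfval0 j
  have hfball : ∀ j, f j ∈ Metric.closedBall (0 : StrongDual ℝ V) 1 := by
    intro j
    simp [Metric.mem_closedBall, dist_zero_right, hf1 j]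
  obtain ⟨f₀, hf₀mem, ψ, hψ, hψto⟩ :=
    (isCompact_closedBall (0 : StrongDual ℝ V) 1).tendsto_subseq hfball
  have hf₀1 : ‖f₀‖ ≤ 1 := by
    simpa [Metric.mem_closedBall, dist_zero_right] using hf₀mem
  have hσψto : Tendsto (fun k => σ (ψ k)) atTop (𝓝 0) :=
    hσto.comp hψ.tendsto_atTop
  -- evaluation convergence
  have hevu : Tendsto (fun k => f (ψ k) u) atTop (𝓝 (f₀ u)) :=
    ((ContinuousLinearMap.apply ℝ ℝ u).continuous.tendsto f₀).comp hψto
  have hevv : Tendsto (fun k => f (ψ k) v) atTop (𝓝 (f₀ v)) :=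
    ((ContinuousLinearMap.apply ℝ ℝ v).continuous.tendsto f₀).comp hψto
  -- f j u → 1
  have hnorm_to : Tendsto (fun k => ‖u + σ (ψ k) • v‖) atTop (𝓝 1) := by
    have : Tendsto (fun k => u + σ (ψ k) • v) atTop (𝓝 (u + (0:ℝ) • v)) := by
      exact tendsto_const_nhds.add (hσψto.smul tendsto_const_nhds)
    have := this.norm
    simpa [hu] using this
  have hfv_bd : ∀ j, |f j v| ≤ ‖v‖ := by
    intro j
    calc |f j v| = ‖f j v‖ := rfl
      _ ≤ ‖f j‖ * ‖v‖ := (f j).le_opNorm v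
      _ ≤ 1 * ‖v‖ := by apply mul_le_mul_of_nonneg_right (le_of_eq (hf1 j)) (norm_nonneg v)
      _ = ‖v‖ := one_mul _
  have hsfv : Tendsto (fun k => σ (ψ k) * f (ψ k) v) atTop (𝓝 0) := by
    apply squeeze_zero_norm (fun k => ?_) (by simpa using hσψto.norm.mul_const ‖v‖)
    rw [Real.norm_eq_abs, abs_mul, abs_of_pos (hσ0 (ψ k))]
    exact mul_le_mul_of_nonneg_left (hfv_bd (ψ k)) (hσ0 (ψ k)).le
  have hfu_to : Tendsto (fun k => f (ψ k) u) atTop (𝓝 1) := by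
    have heq : ∀ k, f (ψ k) u = ‖u + σ (ψ k) • v‖ - σ (ψ k) * f (ψ k) v := by
      intro k
      have := hfval (ψ k)
      have hmap : f (ψ k) (u + σ (ψ k) • v) = f (ψ k) u + σ (ψ k) * f (ψ k) v := by
        rw [map_add, map_smul]; rfl
      rw [hmap] at this
      linarith [this]
    simp only [heq]
    simpa using hnorm_to.sub hsfv
  have hf₀u : f₀ u = 1 := tendsto_nhds_unique hevu hfu_to
  -- each f j v > fp v + ε
  have hfjv : ∀ j, fp v + ε ≤ f j v := by
    intro j
    have hg := hcon (σ j) (hσ0 j)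
    have hfju : f j u ≤ 1 := by
      calc f j u ≤ |f j u| := le_abs_self _
        _ ≤ ‖f j‖ * ‖u‖ := (f j).le_opNorm u
        _ = 1 := by rw [hf1 j, hu, one_mul]
    have hfpval : fp (u + σ j • v) = 1 + σ j * fp v := by
      rw [map_add, map_smul, hfpu]; rfl
    have hfval' : ‖u + σ j • v‖ = f j u + σ j * f j v := by
      rw [← hfval j, map_add, map_smul]; rfl
    rw [hfpval, hfval'] at hg
    have : ε * σ j + σ j * fp v < σ j * f j v := by linarith
    have hfin : ε + fp v < f j v := by
      have hσj := hσ0 j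
      nlinarith
    linarith
  have : fp v + ε ≤ f₀ v := ge_of_tendsto hevv (Filter.Eventually.of_forall (fun k => hfjv (ψ k)))
  have : f₀ v ≤ fp v := hmax f₀ hf₀1 hf₀u
  linarith

-- Step A : basic r/g theory packaged as one lemma producing everything needed
lemma rg_theory [FiniteDimensional ℝ V] (u v : V) (hu : ‖u‖ = 1) :
    ∃ (fp : StrongDual ℝ V) (g : ℝ → ℝ),
      ‖fp‖ ≤ 1 ∧ fp u = 1 ∧
      (∀ w, 0 ≤ ‖w‖ - fp w) ∧
      (∀ (w₁ w₂ : V) (c d : ℝ), 0 ≤ c → 0 ≤ d → c + d = 1 →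
        (‖c•w₁ + d•w₂‖ - fp (c•w₁ + d•w₂)) ≤ c * (‖w₁‖ - fp w₁) + d * (‖w₂‖ - fp w₂)) ∧
      (∀ α β : ℝ, 0 < α → ‖α • u + β • v‖ - fp (α • u + β • v) = α * g (β / α)) ∧
      (g 0 = 0) ∧ (∀ σ, 0 ≤ g σ) ∧
      (∀ σ σ' : ℝ, 0 ≤ σ → σ ≤ σ' → g σ ≤ g σ') ∧
      (∀ ε : ℝ, 0 < ε → ∃ σ₀ : ℝ, 0 < σ₀ ∧ ∀ σ, 0 < σ → σ ≤ σ₀ → g σ ≤ ε * σ) := by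
  obtain ⟨fp, hfp1, hfpu, hfpmax⟩ := exists_fplus u v hu
  set r : V → ℝ := fun w => ‖w‖ - fp w with hrdef
  set g : ℝ → ℝ := fun σ => r (u + σ • v) with hgdef
  have hr0 : ∀ w, 0 ≤ r w := by
    intro w
    have h1 : fp w ≤ |fp w| := le_abs_self _
    have h2 : |fp w| ≤ ‖fp‖ * ‖w‖ := fp.le_opNorm w
    have h3 : ‖fp‖ * ‖w‖ ≤ 1 * ‖w‖ := mul_le_mul_of_nonneg_right hfp1 (norm_nonneg w)
    simp only [hrdef]
    simp only [one_mul] at h3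
    linarith
  have hrc : ∀ (w₁ w₂ : V) (c d : ℝ), 0 ≤ c → 0 ≤ d → c + d = 1 →
      r (c•w₁ + d•w₂) ≤ c * r w₁ + d * r w₂ := by
    intro w₁ w₂ c d hc hd hcd
    have h1 : ‖c•w₁ + d•w₂‖ ≤ c * ‖w₁‖ + d * ‖w₂‖ := by
      calc ‖c•w₁ + d•w₂‖ ≤ ‖c•w₁‖ + ‖d•w₂‖ := norm_add_le _ _
        _ = c * ‖w₁‖ + d * ‖w₂‖ := by
            rw [norm_smul, norm_smul, Real.norm_eq_abs, Real.norm_eq_abs,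
              abs_of_nonneg hc, abs_of_nonneg hd]
    have h2 : fp (c•w₁ + d•w₂) = c * fp w₁ + d * fp w₂ := by
      rw [map_add, map_smul, map_smul]; rfl
    simp only [hrdef]
    rw [h2]; ring_nf; linarith
  have hrhom : ∀ (c : ℝ) (w : V), 0 ≤ c → r (c • w) = c * r w := by
    intro c w hc
    simp only [hrdef]
    rw [norm_smul, map_smul, Real.norm_eq_abs, abs_of_nonneg hc]
    ring_nf
  have hrcoord : ∀ α β : ℝ, 0 < α → r (α • u + β • v) = α * g (β / α) := by
    intro α β hα
    have : α • u + β • v = α • (u + (β / α) • v) := by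
      rw [smul_add, smul_smul, mul_div_cancel₀ _ (ne_of_gt hα)]
    rw [this, hrhom α _ hα.le]
  have hg0 : g 0 = 0 := by
    simp only [hgdef, hrdef, zero_smul, add_zero, hu, hfpu]
    norm_num
  have hgpos : ∀ σ, 0 ≤ g σ := fun σ => hr0 _
  have hgscale : ∀ σ σ' : ℝ, 0 < σ' → 0 ≤ σ → σ ≤ σ' → g σ ≤ (σ/σ') * g σ' := by
    intro σ σ' hσ' hσ0 hσσ'
    have hc : (0:ℝ) ≤ σ/σ' := div_nonneg hσ0 hσ'.le
    have hd : (0:ℝ) ≤ 1 - σ/σ' := by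
      rw [sub_nonneg, div_le_one hσ']; exact hσσ'
    have hkey : u + σ • v = (σ/σ') • (u + σ' • v) + (1 - σ/σ') • (u + (0:ℝ) • v) := by
      have h1 : (σ/σ') * σ' = σ := div_mul_cancel₀ _ (ne_of_gt hσ')
      rw [smul_add, smul_add, smul_smul, h1]
      module
    have := hrc (u + σ' • v) (u + (0:ℝ) • v) (σ/σ') (1 - σ/σ') hc hd (by ring)
    rw [← hkey] at this
    calc g σ ≤ (σ/σ') * r (u + σ' • v) + (1 - σ/σ') * r (u + (0:ℝ) • v) := this
      _ = (σ/σ') * g σ' + (1 - σ/σ') * g 0 := rfl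
      _ = (σ/σ') * g σ' := by rw [hg0]; ring
  have hgmono : ∀ σ σ' : ℝ, 0 ≤ σ → σ ≤ σ' → g σ ≤ g σ' := by
    intro σ σ' hσ0 hσσ'
    rcases eq_or_lt_of_le hσ0 with h | h
    · rw [← h, hg0]; exact hgpos σ'
    rcases eq_or_lt_of_le hσσ' with h2 | h2
    · rw [h2]
    have hσ'pos : 0 < σ' := lt_trans h h2
    calc g σ ≤ (σ/σ') * g σ' := hgscale σ σ' hσ'pos hσ0 hσσ'
      _ ≤ 1 * g σ' := by
          apply mul_le_mul_of_nonneg_right _ (hgpos σ')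
          rw [div_le_one hσ'pos]; exact hσσ'
      _ = g σ' := one_mul _
  have hgsl : ∀ ε : ℝ, 0 < ε → ∃ σ₀ : ℝ, 0 < σ₀ ∧ ∀ σ, 0 < σ → σ ≤ σ₀ → g σ ≤ ε * σ := by
    intro ε hε
    obtain ⟨σ₁, hσ₁pos, hσ₁⟩ := lemA0 u v hu fp hfp1 hfpu hfpmax hε
    refine ⟨σ₁, hσ₁pos, fun σ hσ0 hσσ₁ => ?_⟩
    have h1 : g σ ≤ (σ/σ₁) * g σ₁ := hgscale σ σ₁ hσ₁pos hσ0.le hσσ₁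
    have h2 : g σ₁ ≤ ε * σ₁ := hσ₁
    calc g σ ≤ (σ/σ₁) * g σ₁ := h1
      _ ≤ (σ/σ₁) * (ε * σ₁) := by
          apply mul_le_mul_of_nonneg_left h2 (div_nonneg hσ0.le hσ₁pos.le)
      _ = ε * σ := by field_simp
  exact ⟨fp, g, hfp1, hfpu, hr0, hrc, hrcoord, hg0, hgpos, hgmono, hgsl⟩


lemma rdiff_to_zero [FiniteDimensional ℝ V] (u v : V)
    (fp : StrongDual ℝ V) (g : ℝ → ℝ)
    (hr0 : ∀ w, 0 ≤ ‖w‖ - fp w)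
    (hrc : ∀ (w₁ w₂ : V) (c d : ℝ), 0 ≤ c → 0 ≤ d → c + d = 1 →
        (‖c•w₁ + d•w₂‖ - fp (c•w₁ + d•w₂)) ≤ c * (‖w₁‖ - fp w₁) + d * (‖w₂‖ - fp w₂))
    (hrcoord : ∀ α β : ℝ, 0 < α → ‖α • u + β • v‖ - fp (α • u + β • v) = α * g (β / α))
    (hgpos : ∀ σ, 0 ≤ g σ)
    (hgmono : ∀ σ σ' : ℝ, 0 ≤ σ → σ ≤ σ' → g σ ≤ g σ')
    (hgsl : ∀ ε : ℝ, 0 < ε → ∃ σ₀ : ℝ, 0 < σ₀ ∧ ∀ σ, 0 < σ → σ ≤ σ₀ → g σ ≤ ε * σ)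
    (z : ℕ → V) (a b : ℕ → ℝ) (hz : ∀ n, z n = a n • u + b n • v)
    (ha : Tendsto a atTop atTop) (hb : Tendsto b atTop atTop)
    (hs : Tendsto (fun n => b n / a n) atTop (𝓝 0))
    (x : V) (p q : ℝ) (hx : x = p • u + q • v) :
    Tendsto (fun n => (‖z n - x‖ - fp (z n - x)) - (‖z n‖ - fp (z n))) atTop (𝓝 0) := by
  set r : V → ℝ := fun w => ‖w‖ - fp w with hrdef
  set C : ℝ := max (max |p| |q|) 1 with hC
  have hC1 : 1 ≤ C := le_max_right _ _
  have hCpos : 0 < C := lt_of_lt_of_le one_pos hC1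
  have hpC : |p| ≤ C := le_trans (le_max_left _ _) (le_max_left _ _)
  have hqC : |q| ≤ C := le_trans (le_max_right _ _) (le_max_left _ _)
  rw [Metric.tendsto_atTop]
  intro ε hε
  obtain ⟨σ₀, hσ₀pos, hσ₀⟩ := hgsl (ε / (2 * 64 * C)) (by positivity)
  have hev : ∀ᶠ n in atTop, 0 < a n ∧ 4 * C ≤ b n ∧ b n / a n ≤ 1/2 ∧
      8 * (b n / a n) ≤ σ₀ ∧ 0 < b n := by
    have h1 := ha.eventually (eventually_gt_atTop 0)
    have h2 := hb.eventually (eventually_ge_atTop (4 * C))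
    have h5 := hb.eventually (eventually_gt_atTop 0)
    have h3 : ∀ᶠ n in atTop, b n / a n ≤ 1/2 := by
      have := hs.eventually (eventually_le_nhds (by norm_num : (0:ℝ) < 1/2))
      exact this
    have h4 : ∀ᶠ n in atTop, 8 * (b n / a n) ≤ σ₀ := by
      have h8 : Tendsto (fun n => 8 * (b n / a n)) atTop (𝓝 0) := by
        simpa using hs.const_mul (8:ℝ)
      exact h8.eventually (eventually_le_nhds hσ₀pos)
    filter_upwards [h1, h2, h3, h4, h5] with n e1 e2 e3 e4 e5
    exact ⟨e1, e2, e3, e4, e5⟩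
  obtain ⟨N, hN⟩ := hev.exists_forall_of_atTop
  refine ⟨N, fun n hn => ?_⟩
  obtain ⟨han, hbn4C, hs12, hs8, hbn0⟩ := hN n hn
  rw [Real.dist_eq, sub_zero]
  show |(‖z n - x‖ - fp (z n - x)) - (‖z n‖ - fp (z n))| < ε
  set s : ℝ := b n / a n with hsdef
  have hspos : 0 < s := div_pos hbn0 han
  have hba : b n ≤ a n / 2 := by
    rw [hsdef] at hs12
    rw [div_le_iff₀ han] at hs12
    linarith
  set ρ : ℝ := b n / (2 * C) with hρdef
  have hρpos : 0 < ρ := div_pos hbn0 (by positivity)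
  have hρC : ρ * C = b n / 2 := by
    rw [hρdef]; field_simp
  -- the convex function along the segment
  set φτ : ℝ → ℝ := fun τ => r (z n - τ • x) with hφτ
  have hφconv : ConvexOn ℝ univ φτ := by
    refine ⟨convex_univ, fun τ₁ _ τ₂ _ c d hc hd hcd => ?_⟩
    have hkey : z n - (c • τ₁ + d • τ₂) • x = c • (z n - τ₁ • x) + d • (z n - τ₂ • x) := by
      have : z n = (c + d) • z n := by rw [hcd, one_smul]
      rw [smul_sub, smul_sub, smul_smul, smul_smul]
      nth_rewrite 1 [this]
      rw [add_smul, smul_eq_mul, smul_eq_mul, add_smul]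
      abel
    simp only [hφτ, hkey]
    exact hrc _ _ c d hc hd hcd
  have hφ0 : ∀ τ, 0 ≤ φτ τ := fun τ => hr0 _
  have hb1 : |φτ 1 - φτ 0| ≤ (φτ (1 + ρ) + φτ (-ρ)) / ρ := slope_bound φτ hφconv hφ0 hρpos
  have hφτ1 : φτ 1 = r (z n - x) := by simp [hφτ]
  have hφτ0 : φτ 0 = r (z n) := by simp [hφτ]
  -- compute the two endpoints in coordinates and bound them
  have hcoord : ∀ τ : ℝ, z n - τ • x = (a n - τ * p) • u + (b n - τ * q) • v := by
    intro τ
    rw [hz n, hx]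
    module
  have hbound : ∀ τ : ℝ, |τ| * C ≤ 3 * b n / 4 → φτ τ ≤ 2 * a n * g (8 * s) := by
    intro τ hτ
    have hτp : |τ * p| ≤ 3 * b n / 4 := by
      rw [abs_mul]
      calc |τ| * |p| ≤ |τ| * C := mul_le_mul_of_nonneg_left hpC (abs_nonneg τ)
        _ ≤ 3 * b n / 4 := hτ
    have hτq : |τ * q| ≤ 3 * b n / 4 := by
      rw [abs_mul]
      calc |τ| * |q| ≤ |τ| * C := mul_le_mul_of_nonneg_left hqC (abs_nonneg τ)
        _ ≤ 3 * b n / 4 := hτ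
    have hτp' := abs_le.1 hτp
    have hτq' := abs_le.1 hτq
    have hA : a n / 2 ≤ a n - τ * p ∧ a n - τ * p ≤ 2 * a n := by
      constructor <;> nlinarith [hτp'.1, hτp'.2]
    have hApos : 0 < a n - τ * p := lt_of_lt_of_le (by linarith) hA.1
    have hB : 0 ≤ b n - τ * q ∧ b n - τ * q ≤ 7 * b n / 4 := by
      constructor <;> linarith [hτq'.1, hτq'.2]
    have hslope : (b n - τ * q) / (a n - τ * p) ≤ 8 * s := by
      rw [div_le_iff₀ hApos, hsdef]
      have h8 : 8 * (b n / a n) * (a n - τ * p) = 8 * b n * ((a n - τ * p) / a n) := by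
        field_simp
      rw [h8]
      have : (1:ℝ)/2 ≤ (a n - τ * p) / a n := by
        rw [le_div_iff₀ han]
        nlinarith [hA.1]
      nlinarith [hB.2, hbn0]
    have hslope0 : 0 ≤ (b n - τ * q) / (a n - τ * p) := div_nonneg hB.1 hApos.le
    have hval : φτ τ = (a n - τ * p) * g ((b n - τ * q) / (a n - τ * p)) := by
      simp only [hφτ, hcoord τ]
      exact hrcoord _ _ hApos
    rw [hval]
    calc (a n - τ * p) * g ((b n - τ * q) / (a n - τ * p))
        ≤ (a n - τ * p) * g (8 * s) := by
          apply mul_le_mul_of_nonneg_left (hgmono _ _ hslope0 hslope) hApos.le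
      _ ≤ 2 * a n * g (8 * s) := by
          apply mul_le_mul_of_nonneg_right hA.2 (hgpos _)
  have hCb : C ≤ b n / 4 := by linarith
  have hend1 : φτ (1 + ρ) ≤ 2 * a n * g (8 * s) := by
    apply hbound
    have : |1 + ρ| = 1 + ρ := abs_of_pos (by linarith)
    rw [this]
    have : (1 + ρ) * C = C + ρ * C := by ring
    rw [this, hρC]
    linarith
  have hend2 : φτ (-ρ) ≤ 2 * a n * g (8 * s) := by
    apply hbound
    rw [abs_neg, abs_of_pos hρpos, hρC]
    linarith
  -- total bound
  have hgb : g (8 * s) ≤ (ε / (2 * 64 * C)) * (8 * s) := hσ₀ _ (by linarith) hs8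
  have htot : |r (z n - x) - r (z n)| ≤ 64 * C * (ε / (2 * 64 * C)) := by
    rw [← hφτ1, ← hφτ0]
    calc |φτ 1 - φτ 0| ≤ (φτ (1 + ρ) + φτ (-ρ)) / ρ := hb1
      _ ≤ (2 * a n * g (8 * s) + 2 * a n * g (8 * s)) / ρ := by
          exact div_le_div_of_nonneg_right (by linarith) hρpos.le
      _ = 4 * a n * g (8 * s) * (2 * C / b n) := by
          rw [hρdef]; field_simp; ring
      _ ≤ 4 * a n * ((ε / (2 * 64 * C)) * (8 * s)) * (2 * C / b n) := by
          apply mul_le_mul_of_nonneg_right _ (by positivity)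
          apply mul_le_mul_of_nonneg_left hgb (by positivity)
      _ = 64 * C * (ε / (2 * 64 * C)) := by
          rw [hsdef]; field_simp; ring
  have : 64 * C * (ε / (2 * 64 * C)) = ε / 2 := by field_simp
  rw [this] at htot
  calc |r (z n - x) - r (z n)| ≤ ε / 2 := htot
    _ < ε := by linarith

lemma case2 [FiniteDimensional ℝ V] (h : V → ℝ) (u v : V) (hu : ‖u‖ = 1)
    (huv : ∀ x : V, ∃ p q : ℝ, x = p • u + q • v)
    (z : ℕ → V) (a b : ℕ → ℝ) (hz : ∀ n, z n = a n • u + b n • v)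
    (ha : Tendsto a atTop atTop) (hb : Tendsto b atTop atTop)
    (hs : Tendsto (fun n => b n / a n) atTop (𝓝 0))
    (hφ : ∀ x, Tendsto (fun n => phi (z n) x) atTop (𝓝 (h x))) :
    ∃ (T : Set ℝ) (γ : ℝ → V), IsAlmostGeodesic T γ ∧
      ∀ K : Set V, IsCompact K → ∀ ε > (0 : ℝ), ∃ M : ℝ, ∀ s ∈ T, M ≤ s →
        ∀ x ∈ K, |phi (γ s) x - h x| < ε := by
  obtain ⟨fp, g, hfp1, hfpu, hr0, hrc, hrcoord, hg0, hgpos, hgmono, hgsl⟩ := rg_theory u v hu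
  have hphi_eq : ∀ (w x : V), phi w x = -fp x + ((‖w - x‖ - fp (w - x)) - (‖w‖ - fp w)) := by
    intro w x
    simp only [phi]
    rw [map_sub]
    ring
  have hmain : ∀ x : V, h x = -fp x := by
    intro x
    obtain ⟨p, q, hx⟩ := huv x
    have h1 := rdiff_to_zero u v fp g hr0 hrc hrcoord hgpos hgmono hgsl z a b hz ha hb hs x p q hx
    have h2 : Tendsto (fun n => phi (z n) x) atTop (𝓝 (-fp x + 0)) := by
      simp only [hphi_eq]
      exact tendsto_const_nhds.add h1
    have h3 := tendsto_nhds_unique (hφ x) h2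
    rw [h3, add_zero]
  have hfpv : |fp v| ≤ ‖v‖ := by
    calc |fp v| ≤ ‖fp‖ * ‖v‖ := fp.le_opNorm v
      _ ≤ 1 * ‖v‖ := mul_le_mul_of_nonneg_right hfp1 (norm_nonneg v)
      _ = ‖v‖ := one_mul _
  set cv : ℝ := ‖v‖ with hcv
  have hcv0 : 0 ≤ cv := norm_nonneg v
  set base : ℕ → ℝ := fun k => (2*(k:ℝ)+2)*(cv+1) + 2*(k:ℝ) + 2 with hbase
  have hC : ∀ (k : ℕ) (B : ℝ), ∃ W : ℝ, B ≤ W ∧ 1 ≤ W ∧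
      W * g ((4*(k:ℝ)+4)/W) ≤ (1/2:ℝ)^k := by
    intro k B
    have hden : (0:ℝ) < 4*(k:ℝ)+4 := by positivity
    obtain ⟨σ₀, hσ₀pos, hσ₀⟩ := hgsl ((1/2:ℝ)^k / (4*(k:ℝ)+4)) (by positivity)
    have hmaxB : (0:ℝ) < max B 1 := lt_of_lt_of_le one_pos (le_max_right _ _)
    set σ : ℝ := min σ₀ ((4*(k:ℝ)+4)/(max B 1)) with hσdef
    have hσpos : 0 < σ := lt_min hσ₀pos (by positivity)
    have hWmax : max B 1 ≤ (4*(k:ℝ)+4)/σ := by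
      rw [le_div_iff₀ hσpos]
      calc max B 1 * σ ≤ max B 1 * ((4*(k:ℝ)+4)/(max B 1)) :=
            mul_le_mul_of_nonneg_left (min_le_right _ _) hmaxB.le
        _ = 4*(k:ℝ)+4 := by field_simp
    have hWσ : (4*(k:ℝ)+4)/((4*(k:ℝ)+4)/σ) = σ := by
      rw [div_div_eq_mul_div, mul_comm, mul_div_assoc, div_self (ne_of_gt hden), mul_one]
    refine ⟨(4*(k:ℝ)+4)/σ, le_trans (le_max_left _ _) hWmax,
      le_trans (le_max_right _ _) hWmax, ?_⟩
    rw [hWσ]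
    have hgσ : g σ ≤ ((1/2:ℝ)^k / (4*(k:ℝ)+4)) * σ := hσ₀ σ hσpos (min_le_left _ _)
    calc (4*(k:ℝ)+4)/σ * g σ ≤ (4*(k:ℝ)+4)/σ * (((1/2:ℝ)^k / (4*(k:ℝ)+4)) * σ) := by
          apply mul_le_mul_of_nonneg_left hgσ (by positivity)
      _ = (1/2:ℝ)^k := by field_simp
  -- recursive construction of A
  set A : ℕ → ℝ := fun k => Nat.rec (hC 0 (base 0)).choose
    (fun k Ak => (hC (k+1) (max (2*Ak) (base (k+1)))).choose) k with hAdef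
  have hA0 : base 0 ≤ A 0 ∧ 1 ≤ A 0 ∧ A 0 * g ((4*((0:ℕ):ℝ)+4)/A 0) ≤ (1/2:ℝ)^(0:ℕ) :=
    (hC 0 (base 0)).choose_spec
  have hAsucc : ∀ k : ℕ, max (2*(A k)) (base (k+1)) ≤ A (k+1) ∧ 1 ≤ A (k+1) ∧
      A (k+1) * g ((4*((k+1:ℕ):ℝ)+4)/A (k+1)) ≤ (1/2:ℝ)^(k+1) :=
    fun k => (hC (k+1) (max (2*(A k)) (base (k+1)))).choose_spec
  have hAbase : ∀ k : ℕ, base k ≤ A k := by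
    intro k
    cases k with
    | zero => exact hA0.1
    | succ k => exact le_trans (le_max_right _ _) (hAsucc k).1
  have hA1 : ∀ k : ℕ, 1 ≤ A k := by
    intro k
    cases k with
    | zero => exact hA0.2.1
    | succ k => exact (hAsucc k).2.1
  have hAg : ∀ k : ℕ, A k * g ((4*(k:ℝ)+4)/A k) ≤ (1/2:ℝ)^k := by
    intro k
    cases k with
    | zero => exact_mod_cast hA0.2.2
    | succ k => exact_mod_cast (hAsucc k).2.2
  have hAdouble : ∀ k : ℕ, 2 * A k ≤ A (k+1) :=
    fun k => le_trans (le_max_left _ _) (hAsucc k).1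
  have hApos : ∀ k : ℕ, 0 < A k := fun k => lt_of_lt_of_le one_pos (hA1 k)
  have hA2 : ∀ k l : ℕ, k < l → 2 * A k ≤ A l := by
    intro k l hkl
    induction l with
    | zero => omega
    | succ l ih =>
      rcases Nat.lt_succ_iff_lt_or_eq.1 hkl with h' | h'
      · calc 2 * A k ≤ A l := ih h'
          _ ≤ 2 * A l := by linarith [hApos l]
          _ ≤ A (l+1) := hAdouble l
      · rw [h']; exact hAdouble l
  have hAbase' : ∀ k : ℕ, (2*(k:ℝ)+2)*(cv+1) + 2*(k:ℝ) + 2 ≤ A k := fun k => hAbase k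
  -- the sequence y and times t
  set y : ℕ → V := fun k => A k • u + (k:ℝ) • v with hy
  set t : ℕ → ℝ := fun k => ‖y k‖ with htdef
  have hfpy : ∀ k : ℕ, fp (y k) = A k + (k:ℝ) * fp v := by
    intro k
    simp only [hy]
    rw [map_add, map_smul, map_smul, hfpu]
    simp [smul_eq_mul]
  have hry : ∀ k : ℕ, ‖y k‖ - fp (y k) ≤ (1/2:ℝ)^k := by
    intro k
    have hcoord : ‖y k‖ - fp (y k) = A k * g ((k:ℝ)/A k) := by
      simp only [hy]
      exact hrcoord _ _ (hApos k)
    rw [hcoord]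
    calc A k * g ((k:ℝ)/A k) ≤ A k * g ((4*(k:ℝ)+4)/A k) := by
          apply mul_le_mul_of_nonneg_left _ (hApos k).le
          exact hgmono _ _ (div_nonneg (Nat.cast_nonneg k : (0:ℝ) ≤ (k:ℝ)) (hApos k).le)
            (div_le_div_of_nonneg_right (by linarith) (hApos k).le)
      _ ≤ (1/2:ℝ)^k := hAg k
  -- basic facts about t
  have hfpv' := abs_le.1 hfpv
  have hylb : ∀ k : ℕ, A k - (k:ℝ) * cv ≤ t k := by
    intro k
    have h1 : fp (y k) ≤ t k := by
      have h2 := hr0 (y k)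
      simp only [htdef]
      linarith
    rw [hfpy k] at h1
    nlinarith [(Nat.cast_nonneg k : (0:ℝ) ≤ (k:ℝ)), hfpv'.1]
  have hyub : ∀ k : ℕ, t k ≤ A k + (k:ℝ) * cv := by
    intro k
    simp only [htdef, hy]
    calc ‖A k • u + (k:ℝ) • v‖ ≤ ‖A k • u‖ + ‖(k:ℝ) • v‖ := norm_add_le _ _
      _ = A k + (k:ℝ) * cv := by
          rw [norm_smul, norm_smul, hu, Real.norm_eq_abs, Real.norm_eq_abs,
            abs_of_pos (hApos k), abs_of_nonneg (Nat.cast_nonneg k : (0:ℝ) ≤ (k:ℝ)), mul_one, hcv]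
  have ht1 : ∀ k : ℕ, 1 ≤ t k := by
    intro k
    have h1 := hylb k
    have h2 := hAbase' k
    nlinarith [(Nat.cast_nonneg k : (0:ℝ) ≤ (k:ℝ)), hcv0]
  have htk : ∀ k : ℕ, (k:ℝ) ≤ t k := by
    intro k
    have h1 := hylb k
    have h2 := hAbase' k
    nlinarith [(Nat.cast_nonneg k : (0:ℝ) ≤ (k:ℝ)), hcv0]
  have htm : StrictMono t := by
    apply strictMono_nat_of_lt_succ
    intro k
    have h1 := hyub k
    have h2 := hylb (k+1)
    have h3 := hAdouble k
    have h4 := hAbase' k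
    push_cast at h2
    nlinarith [(Nat.cast_nonneg k : (0:ℝ) ≤ (k:ℝ)), hcv0]
  -- defect bounds
  have hrylk : ∀ k l : ℕ, k < l → ‖y l - y k‖ - fp (y l - y k) ≤ (1/2:ℝ)^l := by
    intro k l hkl
    have hAl2 : 2 * A k ≤ A l := hA2 k l hkl
    have hAlk : 0 < A l - A k := by linarith [hApos k, hApos l]
    have hcoord : y l - y k = (A l - A k) • u + ((l:ℝ) - (k:ℝ)) • v := by
      simp only [hy]; module
    rw [hcoord, hrcoord _ _ hAlk]
    have hlk : (k:ℝ) ≤ (l:ℝ) := Nat.cast_le.2 hkl.le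
    have hslope0 : 0 ≤ ((l:ℝ) - (k:ℝ))/(A l - A k) := by
      apply div_nonneg _ hAlk.le
      linarith
    have hslope : ((l:ℝ) - (k:ℝ))/(A l - A k) ≤ (4*(l:ℝ)+4)/A l := by
      rw [div_le_div_iff₀ hAlk (hApos l)]
      nlinarith [(Nat.cast_nonneg l : (0:ℝ) ≤ (l:ℝ)), (Nat.cast_nonneg k : (0:ℝ) ≤ (k:ℝ)), hApos l, hApos k]
    calc (A l - A k) * g (((l:ℝ) - (k:ℝ))/(A l - A k))
        ≤ (A l - A k) * g ((4*(l:ℝ)+4)/A l) :=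
          mul_le_mul_of_nonneg_left (hgmono _ _ hslope0 hslope) hAlk.le
      _ ≤ A l * g ((4*(l:ℝ)+4)/A l) :=
          mul_le_mul_of_nonneg_right (by linarith [hApos k]) (hgpos _)
      _ ≤ (1/2:ℝ)^l := hAg l
  have hdef : ∀ ε > (0:ℝ), ∃ K : ℕ, ∀ k l : ℕ, K ≤ k → k ≤ l →
      |‖y l - y k‖ + ‖y k‖ - t l| < ε := by
    intro ε hε
    obtain ⟨K, hK⟩ := exists_pow_lt_of_lt_one (show (0:ℝ) < ε/3 by linarith)
      (by norm_num : (1/2:ℝ) < 1)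
    refine ⟨K, fun k l hKk hkl => ?_⟩
    have hpk : ((1:ℝ)/2)^k ≤ (1/2)^K := pow_le_pow_of_le_one (by norm_num) (by norm_num) hKk
    have hpl : ((1:ℝ)/2)^l ≤ (1/2)^k := pow_le_pow_of_le_one (by norm_num) (by norm_num) hkl
    have hidab : ‖y l - y k‖ + ‖y k‖ - t l =
        (‖y l - y k‖ - fp (y l - y k)) + (‖y k‖ - fp (y k)) - (‖y l‖ - fp (y l)) := by
      simp only [htdef]
      rw [map_sub]
      ring
    rw [hidab]
    have h2 := hry k
    have h3 := hry l
    have h0b := hr0 (y k)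
    have h0c := hr0 (y l)
    rcases eq_or_lt_of_le hkl with rfl | hkl'
    · have he : y k - y k = 0 := sub_self _
      rw [he]
      simp only [norm_zero, map_zero]
      have he2 : (0:ℝ) - 0 + (‖y k‖ - fp (y k)) - (‖y k‖ - fp (y k)) = 0 := by ring
      rw [he2, abs_zero]
      exact hε
    · have h1 := hrylk k l hkl'
      have h0a := hr0 (y l - y k)
      rw [abs_lt]
      constructor
      · linarith
      · linarith
  -- pointwise convergence of phi (y k) x
  have hconvpt : ∀ x : V, Tendsto (fun k => phi (y k) x) atTop (𝓝 (h x)) := by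
    intro x
    obtain ⟨p, q, hx⟩ := huv x
    set Cx : ℝ := max (max |p| |q|) 1 with hCx
    have hCx1 : (1:ℝ) ≤ Cx := le_max_right _ _
    have hpC : |p| ≤ Cx := le_trans (le_max_left _ _) (le_max_left _ _)
    have hqC : |q| ≤ Cx := le_trans (le_max_right _ _) (le_max_left _ _)
    rw [hmain x]
    have heq : (fun k => phi (y k) x) =
        fun k => -fp x + ((‖y k - x‖ - fp (y k - x)) - (‖y k‖ - fp (y k))) := by
      funext k; exact hphi_eq (y k) x
    rw [heq, show 𝓝 (-fp x) = 𝓝 (-fp x + 0) by rw [add_zero]]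
    apply tendsto_const_nhds.add
    have hrx : ∀ᶠ k : ℕ in atTop, ‖y k - x‖ - fp (y k - x) ≤ 2 * (1/2:ℝ)^k := by
      rw [eventually_atTop]
      obtain ⟨K0, hK0⟩ := exists_nat_ge (2*Cx)
      refine ⟨K0, fun k hk => ?_⟩
      have hkC : 2*Cx ≤ (k:ℝ) := le_trans hK0 (Nat.cast_le.2 hk)
      have hAk2k : 2*(k:ℝ) + 2 ≤ A k := by nlinarith [hAbase' k, hcv0, (Nat.cast_nonneg k : (0:ℝ) ≤ (k:ℝ))]
      have hpC' := abs_le.1 hpC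
      have hqC' := abs_le.1 hqC
      have hcoord : y k - x = (A k - p) • u + ((k:ℝ) - q) • v := by
        simp only [hy]; rw [hx]; module
      have hApk : 0 < A k - p := by nlinarith
      rw [hcoord, hrcoord _ _ hApk]
      have hq2 : (k:ℝ) - q ≤ 2*(k:ℝ) := by linarith
      have hq0 : 0 ≤ (k:ℝ) - q := by linarith
      have hp2 : A k / 2 ≤ A k - p := by nlinarith
      have hslope0 : 0 ≤ ((k:ℝ) - q)/(A k - p) := div_nonneg hq0 hApk.le
      have hslope : ((k:ℝ) - q)/(A k - p) ≤ (4*(k:ℝ)+4)/A k := by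
        rw [div_le_div_iff₀ hApk (hApos k)]
        nlinarith [hApos k, (Nat.cast_nonneg k : (0:ℝ) ≤ (k:ℝ))]
      calc (A k - p) * g (((k:ℝ) - q)/(A k - p))
          ≤ (A k - p) * g ((4*(k:ℝ)+4)/A k) :=
            mul_le_mul_of_nonneg_left (hgmono _ _ hslope0 hslope) hApk.le
        _ ≤ 2 * A k * g ((4*(k:ℝ)+4)/A k) := by
            apply mul_le_mul_of_nonneg_right _ (hgpos _)
            nlinarith [hApos k]
        _ = 2 * (A k * g ((4*(k:ℝ)+4)/A k)) := by ring
        _ ≤ 2 * (1/2:ℝ)^k := by linarith [hAg k]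
    apply squeeze_zero_norm' (a := fun k => 3*(1/2:ℝ)^k)
    · filter_upwards [hrx] with k hk
      have h2 := hry k
      have h0a := hr0 (y k - x)
      have h0b := hr0 (y k)
      rw [Real.norm_eq_abs, abs_le]
      constructor
      · have hp : (0:ℝ) < (1/2:ℝ)^k := by positivity
        linarith
      · have hp : (0:ℝ) < (1/2:ℝ)^k := by positivity
        linarith
    · have := (tendsto_pow_atTop_nhds_zero_of_lt_one (by norm_num : (0:ℝ) ≤ 1/2)
        (by norm_num : (1/2:ℝ) < 1)).const_mul (3:ℝ)
      simpa using this
  -- Lipschitz bound for h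
  have hhl : ∀ x y' : V, |h x - h y'| ≤ ‖x - y'‖ := by
    intro x y'
    rw [hmain x, hmain y']
    have he : -fp x - -fp y' = fp (y' - x) := by rw [map_sub]; ring
    rw [he]
    calc |fp (y' - x)| ≤ ‖fp‖ * ‖y' - x‖ := fp.le_opNorm _
      _ ≤ 1 * ‖y' - x‖ := mul_le_mul_of_nonneg_right hfp1 (norm_nonneg _)
      _ = ‖x - y'‖ := by rw [one_mul, norm_sub_rev]
  have hconv : ∀ Ks : Set V, IsCompact Ks → ∀ ε > (0:ℝ), ∃ N : ℕ, ∀ k, N ≤ k →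
      ∀ x ∈ Ks, |phi (y k) x - h x| < ε := by
    intro Ks hKs ε hε
    obtain ⟨N, hN⟩ := lemmaU (fun k => phi_lip (y k)) hhl hconvpt hKs hε
    exact ⟨N, fun k hk x hx => hN k hk x hx⟩
  exact discreteT h y t (fun k => rfl) htm ht1 htk hdef hconv

lemma case1 (h : V → ℝ) (u v : V) (hu : ‖u‖ = 1) (b₀ : ℝ)
    (z : ℕ → V) (a : ℕ → ℝ)
    (ha : Tendsto a atTop atTop)
    (hzz : Tendsto (fun n => ‖z n - (a n • u + b₀ • v)‖) atTop (𝓝 0))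
    (hφ : ∀ x, Tendsto (fun n => phi (z n) x) atTop (𝓝 (h x)))
    (hhl : ∀ x y' : V, |h x - h y'| ≤ ‖x - y'‖) :
    ∃ (T : Set ℝ) (γ : ℝ → V), IsAlmostGeodesic T γ ∧
      ∀ K : Set V, IsCompact K → ∀ ε > (0 : ℝ), ∃ M : ℝ, ∀ s ∈ T, M ≤ s →
        ∀ x ∈ K, |phi (γ s) x - h x| < ε := by
  set c : ℝ := ‖b₀ • v‖ with hc
  have hc0 : 0 ≤ c := norm_nonneg _
  obtain ⟨ψ, hψm, hψ0, hψs⟩ := exists_extraction a ha (c + 1) (2*c + 1)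
  set a' : ℕ → ℝ := fun k => a (ψ k) with ha'
  have ha'step : ∀ k, a' k + (2*c+1) ≤ a' (k+1) := hψs
  have ha'ge : ∀ k : ℕ, c + 1 + (k:ℝ)*(2*c+1) ≤ a' k := by
    intro k
    induction k with
    | zero => simpa using hψ0
    | succ k ih =>
      have := ha'step k
      push_cast
      push_cast at ih
      linarith
  have ha'mono : ∀ k l : ℕ, k ≤ l → a' k ≤ a' l := by
    have : Monotone a' := monotone_nat_of_le_succ (fun k => by linarith [ha'step k])
    exact fun k l hkl => this hkl
  have ha'pos : ∀ k, 0 < a' k := fun k => by nlinarith [ha'ge k, (Nat.cast_nonneg k : (0:ℝ) ≤ (k:ℝ))]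
  set y : ℕ → V := fun k => a' k • u + b₀ • v with hy
  set t : ℕ → ℝ := fun k => ‖y k‖ with htdef
  have hnau : ∀ k, ‖a' k • u‖ = a' k := by
    intro k
    rw [norm_smul, hu, Real.norm_eq_abs, abs_of_pos (ha'pos k), mul_one]
  have hyub : ∀ k, t k ≤ a' k + c := by
    intro k
    simp only [htdef, hy]
    calc ‖a' k • u + b₀ • v‖ ≤ ‖a' k • u‖ + ‖b₀ • v‖ := norm_add_le _ _
      _ = a' k + c := by rw [hnau k, hc]
  have hylb : ∀ k, a' k - c ≤ t k := by
    intro k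
    have h1 : a' k • u = y k - b₀ • v := by simp only [hy]; abel
    have h2 : ‖a' k • u‖ ≤ ‖y k‖ + ‖b₀ • v‖ := by rw [h1]; exact norm_sub_le _ _
    rw [hnau k] at h2
    simp only [htdef]
    linarith [h2]
  have ht1 : ∀ k : ℕ, 1 ≤ t k := by
    intro k
    have := hylb k
    nlinarith [ha'ge k, (Nat.cast_nonneg k : (0:ℝ) ≤ (k:ℝ))]
  have htk : ∀ k : ℕ, (k:ℝ) ≤ t k := by
    intro k
    have := hylb k
    nlinarith [ha'ge k, (Nat.cast_nonneg k : (0:ℝ) ≤ (k:ℝ))]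
  have htm : StrictMono t := by
    apply strictMono_nat_of_lt_succ
    intro k
    have h1 := hyub k
    have h2 := hylb (k+1)
    have h3 := ha'step k
    linarith
  have hylk : ∀ k l : ℕ, k ≤ l → ‖y l - y k‖ = a' l - a' k := by
    intro k l hkl
    have h1 : y l - y k = (a' l - a' k) • u := by
      simp only [hy]
      rw [sub_smul]
      abel
    rw [h1, norm_smul, hu, Real.norm_eq_abs, mul_one, abs_of_nonneg (by linarith [ha'mono k l hkl])]
  set B : ℕ → ℝ := fun k => t k - a' k with hB
  have hBanti : Antitone B := by
    intro k l hkl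
    have h1 : t l ≤ ‖y l - y k‖ + t k := by
      simp only [htdef]
      calc ‖y l‖ = ‖(y l - y k) + y k‖ := by rw [sub_add_cancel]
        _ ≤ ‖y l - y k‖ + ‖y k‖ := norm_add_le _ _
    rw [hylk k l hkl] at h1
    simp only [hB]
    linarith
  have hBbdd : BddBelow (Set.range B) := by
    refine ⟨-c, ?_⟩
    rintro x ⟨k, rfl⟩
    simp only [hB]
    linarith [hylb k]
  have htendB : Tendsto B atTop (𝓝 (⨅ k, B k)) := tendsto_atTop_ciInf hBanti hBbdd
  have hdef : ∀ ε > (0:ℝ), ∃ K : ℕ, ∀ k l : ℕ, K ≤ k → k ≤ l →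
      |‖y l - y k‖ + ‖y k‖ - t l| < ε := by
    intro ε hε
    have hev : ∀ᶠ k in atTop, B k < (⨅ k, B k) + ε :=
      htendB.eventually (eventually_lt_nhds (show (⨅ k, B k) < (⨅ k, B k) + ε by linarith))
    obtain ⟨K, hK⟩ := hev.exists_forall_of_atTop
    refine ⟨K, fun k l hKk hkl => ?_⟩
    have hBl : (⨅ k, B k) ≤ B l := ciInf_le hBbdd l
    have he : ‖y l - y k‖ + ‖y k‖ - t l = B k - B l := by
      rw [hylk k l hkl]
      simp only [hB, htdef]
      ring
    rw [he, abs_of_nonneg (by linarith [hBanti hkl])]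
    have := hK k hKk
    linarith
  have hconvpt : ∀ x : V, Tendsto (fun k => phi (y k) x) atTop (𝓝 (h x)) := by
    intro x
    have hzy : Tendsto (fun k => ‖z (ψ k) - y k‖) atTop (𝓝 0) := by
      have := hzz.comp hψm.tendsto_atTop
      simpa [hy, ha', Function.comp_def] using this
    have hd : Tendsto (fun k => phi (z (ψ k)) x - phi (y k) x) atTop (𝓝 0) := by
      apply squeeze_zero_norm' (a := fun k => 2 * ‖z (ψ k) - y k‖)
      · exact Filter.Eventually.of_forall fun k => by
          rw [Real.norm_eq_abs]; exact phi_dist2 _ _ _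
      · simpa using hzy.const_mul (2:ℝ)
    have h1 : Tendsto (fun k => phi (z (ψ k)) x) atTop (𝓝 (h x)) :=
      (hφ x).comp hψm.tendsto_atTop
    have := h1.sub hd
    simpa using this
  have hconv : ∀ Ks : Set V, IsCompact Ks → ∀ ε > (0:ℝ), ∃ N : ℕ, ∀ k, N ≤ k →
      ∀ x ∈ Ks, |phi (y k) x - h x| < ε := by
    intro Ks hKs ε hε
    obtain ⟨N, hN⟩ := lemmaU (fun k => phi_lip (y k)) hhl hconvpt hKs hε
    exact ⟨N, fun k hk x hx => hN k hk x hx⟩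
  exact discreteT h y t (fun k => rfl) htm ht1 htk hdef hconv

theorem two_dim_horofunctions_busemann (V : Type*) [NormedAddCommGroup V]
    [NormedSpace ℝ V] [FiniteDimensional ℝ V] (hdim : Module.finrank ℝ V = 2)
    (h : V → ℝ) (hh : IsHorofunction h) : IsBusemannPoint h := by
  obtain ⟨⟨z0, hz0⟩, hnot⟩ := id hh
  have hφ0 : ∀ x : V, Tendsto (fun n => phi (z0 n) x) atTop (𝓝 (h x)) := by
    intro x
    exact (hz0 {x} isCompact_singleton).tendsto_at (Set.mem_singleton x)
  have hhl : ∀ x y : V, |h x - h y| ≤ ‖x - y‖ := by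
    intro x y
    have h1 : Tendsto (fun n => phi (z0 n) x - phi (z0 n) y) atTop (𝓝 (h x - h y)) :=
      (hφ0 x).sub (hφ0 y)
    rw [abs_le]
    constructor
    · apply ge_of_tendsto h1
      exact Filter.Eventually.of_forall fun n => (abs_le.1 (phi_lip (z0 n) x y)).1
    · apply le_of_tendsto h1
      exact Filter.Eventually.of_forall fun n => (abs_le.1 (phi_lip (z0 n) x y)).2
  -- norms tend to infinity
  have hnorm : Tendsto (fun n => ‖z0 n‖) atTop atTop := by
    by_contra hcon
    rw [tendsto_atTop] at hcon
    push_neg at hcon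
    obtain ⟨B, hB⟩ := hcon
    obtain ⟨ψ, hψm, hψ⟩ := Filter.extraction_of_frequently_atTop hB
    have hball : ∀ k, z0 (ψ k) ∈ Metric.closedBall (0:V) B := by
      intro k
      have := hψ k
      simpa [Metric.mem_closedBall, dist_zero_right] using this.le
    obtain ⟨w₀, _, ψ₂, hψ₂m, hψ₂to⟩ := (isCompact_closedBall (0:V) B).tendsto_subseq hball
    have hkey : ∀ x, h x = phi w₀ x := by
      intro x
      have h1 : Tendsto (fun k => phi (z0 (ψ (ψ₂ k))) x) atTop (𝓝 (h x)) :=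
        (hφ0 x).comp ((hψm.comp hψ₂m).tendsto_atTop)
      have hzw : Tendsto (fun k => z0 (ψ (ψ₂ k))) atTop (𝓝 w₀) := hψ₂to
      have h2 : Tendsto (fun k => phi (z0 (ψ (ψ₂ k))) x) atTop (𝓝 (phi w₀ x)) := by
        have hd : Tendsto (fun k => phi (z0 (ψ (ψ₂ k))) x - phi w₀ x) atTop (𝓝 0) := by
          apply squeeze_zero_norm' (a := fun k => 2 * ‖z0 (ψ (ψ₂ k)) - w₀‖)
          · exact Filter.Eventually.of_forall fun k => by
              rw [Real.norm_eq_abs]; exact phi_dist2 _ _ _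
          · have : Tendsto (fun k => ‖z0 (ψ (ψ₂ k)) - w₀‖) atTop (𝓝 0) := by
              have := hzw.sub (tendsto_const_nhds (x := w₀))
              simpa using this.norm
            simpa using this.const_mul (2:ℝ)
        have := hd.add (tendsto_const_nhds (x := phi w₀ x))
        simpa using this
      exact tendsto_nhds_unique h1 h2
    exact hnot w₀ (funext hkey)
  -- extract subsequence with norms ≥ 1 and normalized directions converging
  obtain ⟨ψ₁, hψ₁m, hψ₁⟩ := Filter.extraction_of_frequently_atTop
    (hnorm.eventually (eventually_ge_atTop 1)).frequently
  have hwmem : ∀ k, ‖z0 (ψ₁ k)‖⁻¹ • z0 (ψ₁ k) ∈ Metric.sphere (0:V) 1 := by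
    intro k
    have h1 : (0:ℝ) < ‖z0 (ψ₁ k)‖ := lt_of_lt_of_le one_pos (hψ₁ k)
    simp only [mem_sphere_iff_norm, sub_zero, norm_smul, Real.norm_eq_abs,
      abs_of_pos (inv_pos.2 h1)]
    field_simp
  obtain ⟨u, humem, ψ₂, hψ₂m, hwto⟩ := (isCompact_sphere (0:V) 1).tendsto_subseq hwmem
  have hu : ‖u‖ = 1 := by simpa [mem_sphere_iff_norm] using humem
  set ψz : ℕ → ℕ := fun k => ψ₁ (ψ₂ k) with hψz
  have hψzm : StrictMono ψz := hψ₁m.comp hψ₂m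
  set z : ℕ → V := fun k => z0 (ψz k) with hzdef
  have hnz1 : ∀ k, (1:ℝ) ≤ ‖z k‖ := fun k => hψ₁ (ψ₂ k)
  have hnzpos : ∀ k, (0:ℝ) < ‖z k‖ := fun k => lt_of_lt_of_le one_pos (hnz1 k)
  have hwlim : Tendsto (fun k => ‖z k‖⁻¹ • z k) atTop (𝓝 u) := hwto
  have hnormz : Tendsto (fun k => ‖z k‖) atTop atTop := hnorm.comp hψzm.tendsto_atTop
  have hφz : ∀ x, Tendsto (fun k => phi (z k) x) atTop (𝓝 (h x)) :=
    fun x => (hφ0 x).comp hψzm.tendsto_atTop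
  -- build a basis (u, v)
  have hu0 : u ≠ 0 := by intro hh0; rw [hh0, norm_zero] at hu; norm_num at hu
  have hspan : Submodule.span ℝ {u} ≠ ⊤ := by
    intro heq
    have h1 : Module.finrank ℝ ↥(Submodule.span ℝ {u}) = 1 := finrank_span_singleton hu0
    rw [heq, finrank_top] at h1
    rw [hdim] at h1
    norm_num at h1
  obtain ⟨v, hv⟩ : ∃ v, v ∉ Submodule.span ℝ {u} := by
    by_contra hcon
    push_neg at hcon
    exact hspan (Submodule.eq_top_iff'.2 hcon)
  have hli : LinearIndependent ℝ ![u, v] := by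
    rw [linearIndependent_fin2]
    simp only [Matrix.cons_val_one, Matrix.head_cons, Matrix.cons_val_zero]
    refine ⟨?_, ?_⟩
    · intro hv0
      exact hv (hv0 ▸ Submodule.zero_mem _)
    · intro c hc
      rcases eq_or_ne c 0 with rfl | hc0
      · rw [zero_smul] at hc
        exact hu0 hc.symm
      · apply hv
        rw [Submodule.mem_span_singleton]
        refine ⟨c⁻¹, ?_⟩
        rw [← hc, smul_smul, inv_mul_cancel₀ hc0, one_smul]
  have hcard : Fintype.card (Fin 2) = Module.finrank ℝ V := by simp [hdim]
  set bas : Module.Basis (Fin 2) ℝ V := basisOfLinearIndependentOfCardEqFinrank hli hcard with hbasdef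
  have hbas : ⇑bas = ![u, v] := coe_basisOfLinearIndependentOfCardEqFinrank hli hcard
  have hbas0 : bas 0 = u := by rw [hbas]; rfl
  have hbas1 : bas 1 = v := by rw [hbas]; rfl
  set ξ : V →ₗ[ℝ] ℝ := bas.coord 0 with hξdef
  set η : V →ₗ[ℝ] ℝ := bas.coord 1 with hηdef
  have hrepr : ∀ x : V, x = ξ x • u + η x • v := by
    intro x
    have h1 := bas.sum_repr x
    rw [Fin.sum_univ_two, hbas0, hbas1] at h1
    simp only [hξdef, hηdef, Module.Basis.coord_apply]
    exact h1.symm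
  have hξu : ξ u = 1 := by
    simp only [hξdef, Module.Basis.coord_apply, ← hbas0, bas.repr_self]
    exact Finsupp.single_eq_same
  have hηu : η u = 0 := by
    simp only [hηdef, Module.Basis.coord_apply, ← hbas0, bas.repr_self]
    exact Finsupp.single_eq_of_ne (by norm_num : (1 : Fin 2) ≠ 0)
  have hξcont : Continuous ξ := LinearMap.continuous_of_finiteDimensional ξ
  have hηcont : Continuous η := LinearMap.continuous_of_finiteDimensional η
  set A : ℕ → ℝ := fun k => ξ (z k) with hA
  set Bc : ℕ → ℝ := fun k => η (z k) with hBc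
  have hzrepr : ∀ k, z k = A k • u + Bc k • v := fun k => hrepr (z k)
  have hξw : Tendsto (fun k => ξ (‖z k‖⁻¹ • z k)) atTop (𝓝 1) := by
    have := (hξcont.tendsto u).comp hwlim
    rwa [hξu] at this
  have hηw : Tendsto (fun k => η (‖z k‖⁻¹ • z k)) atTop (𝓝 0) := by
    have := (hηcont.tendsto u).comp hwlim
    rwa [hηu] at this
  have hAeq : ∀ k, A k = ‖z k‖ * ξ (‖z k‖⁻¹ • z k) := by
    intro k
    rw [map_smul, smul_eq_mul, ← mul_assoc, mul_inv_cancel₀ (ne_of_gt (hnzpos k)), one_mul]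
  have hAtop : Tendsto A atTop atTop := by
    have hev : ∀ᶠ k in atTop, ‖z k‖ * (1/2) ≤ A k := by
      filter_upwards [hξw.eventually (eventually_ge_nhds (by norm_num : (1/2:ℝ) < 1))] with k hk
      rw [hAeq k]
      exact mul_le_mul_of_nonneg_left hk (norm_nonneg _)
    exact tendsto_atTop_mono' atTop hev (hnormz.atTop_mul_const (by norm_num))
  have hBA : Tendsto (fun k => Bc k / A k) atTop (𝓝 0) := by
    have heq : ∀ k, Bc k / A k = η (‖z k‖⁻¹ • z k) / ξ (‖z k‖⁻¹ • z k) := by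
      intro k
      rw [map_smul, map_smul, smul_eq_mul, smul_eq_mul]
      rw [mul_div_mul_left _ _ (inv_ne_zero (ne_of_gt (hnzpos k)))]
    simp only [heq]
    have := hηw.div hξw one_ne_zero
    simpa [Pi.div_def] using this
  refine ⟨hh, ?_⟩
  -- trichotomy
  by_cases hcase : ∃ Bd : ℝ, {k | |Bc k| ≤ Bd}.Infinite
  · obtain ⟨Bd, hBd⟩ := hcase
    obtain ⟨ψ₃, hψ₃m, hψ₃⟩ := Filter.extraction_of_frequently_atTop
      (Nat.frequently_atTop_iff_infinite.2 hBd)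
    have hmem : ∀ k, Bc (ψ₃ k) ∈ Set.Icc (-Bd) Bd := fun k => abs_le.1 (hψ₃ k)
    obtain ⟨b₀, _, ψ₄, hψ₄m, hψ₄to⟩ := (isCompact_Icc (a := -Bd) (b := Bd)).tendsto_subseq hmem
    set ψ₅ : ℕ → ℕ := fun k => ψ₃ (ψ₄ k) with hψ₅
    have hψ₅m : StrictMono ψ₅ := hψ₃m.comp hψ₄m
    apply case1 h u v hu b₀ (fun k => z (ψ₅ k)) (fun k => A (ψ₅ k))
    · exact hAtop.comp hψ₅m.tendsto_atTop
    · have hzz : ∀ k, z (ψ₅ k) - (A (ψ₅ k) • u + b₀ • v) = (Bc (ψ₅ k) - b₀) • v := by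
        intro k
        rw [hzrepr (ψ₅ k)]
        rw [sub_smul]
        abel
      simp only [hzz]
      have hBto : Tendsto (fun k => Bc (ψ₅ k)) atTop (𝓝 b₀) := hψ₄to
      have := (hBto.sub (tendsto_const_nhds (x := b₀)))
      have h2 : Tendsto (fun k => (Bc (ψ₅ k) - b₀) • v) atTop (𝓝 ((0:ℝ) • v)) :=
        Tendsto.smul (by simpa using this) tendsto_const_nhds
      rw [zero_smul] at h2
      simpa using h2.norm
    · exact fun x => (hφz x).comp hψ₅m.tendsto_atTop
    · exact hhl
  · push_neg at hcase
    have habs : Tendsto (fun k => |Bc k|) atTop atTop := by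
      rw [tendsto_atTop]
      intro Bd
      have hfin : {k | |Bc k| ≤ Bd}.Finite := hcase Bd
      have := hfin.eventually_cofinite_notMem
      rw [Nat.cofinite_eq_atTop] at this
      filter_upwards [this] with k hk
      simp only [Set.mem_setOf_eq, not_le] at hk
      linarith
    by_cases hsign : {k | 0 ≤ Bc k}.Infinite
    · obtain ⟨ψ₃, hψ₃m, hψ₃⟩ := Filter.extraction_of_frequently_atTop
        (Nat.frequently_atTop_iff_infinite.2 hsign)
      have hBpos : Tendsto (fun k => Bc (ψ₃ k)) atTop atTop := by
        have h1 : Tendsto (fun k => |Bc (ψ₃ k)|) atTop atTop := habs.comp hψ₃m.tendsto_atTop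
        have h2 : (fun k => |Bc (ψ₃ k)|) = fun k => Bc (ψ₃ k) := by
          funext k; exact abs_of_nonneg (hψ₃ k)
        rwa [h2] at h1
      apply case2 h u v hu (fun x => ⟨ξ x, η x, hrepr x⟩) (fun k => z (ψ₃ k))
        (fun k => A (ψ₃ k)) (fun k => Bc (ψ₃ k)) (fun k => hzrepr (ψ₃ k))
        (hAtop.comp hψ₃m.tendsto_atTop) hBpos
        (hBA.comp hψ₃m.tendsto_atTop)
        (fun x => (hφz x).comp hψ₃m.tendsto_atTop)
    · have hfin : {k | 0 ≤ Bc k}.Finite := Set.not_infinite.1 hsign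
      have hevneg : ∀ᶠ k in atTop, Bc k < 0 := by
        have := hfin.eventually_cofinite_notMem
        rw [Nat.cofinite_eq_atTop] at this
        filter_upwards [this] with k hk
        simpa [Set.mem_setOf_eq, not_le] using hk
      obtain ⟨ψ₃, hψ₃m, hψ₃⟩ := Filter.extraction_of_frequently_atTop hevneg.frequently
      have hBneg : Tendsto (fun k => -Bc (ψ₃ k)) atTop atTop := by
        have h1 : Tendsto (fun k => |Bc (ψ₃ k)|) atTop atTop := habs.comp hψ₃m.tendsto_atTop
        have h2 : (fun k => |Bc (ψ₃ k)|) = fun k => -Bc (ψ₃ k) := by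
          funext k; exact abs_of_neg (hψ₃ k)
        rwa [h2] at h1
      have huv' : ∀ x : V, ∃ p q : ℝ, x = p • u + q • (-v) := by
        intro x
        refine ⟨ξ x, -η x, ?_⟩
        rw [neg_smul_neg]
        exact hrepr x
      have hzrepr' : ∀ k, z (ψ₃ k) = A (ψ₃ k) • u + (-Bc (ψ₃ k)) • (-v) := by
        intro k
        rw [neg_smul_neg]
        exact hzrepr (ψ₃ k)
      apply case2 h u (-v) hu huv' (fun k => z (ψ₃ k))
        (fun k => A (ψ₃ k)) (fun k => -Bc (ψ₃ k)) hzrepr'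
        (hAtop.comp hψ₃m.tendsto_atTop) hBneg
        ?_ (fun x => (hφz x).comp hψ₃m.tendsto_atTop)
      have := (hBA.comp hψ₃m.tendsto_atTop).neg
      simp only [neg_zero] at this
      have heq : (fun k => -Bc (ψ₃ k) / A (ψ₃ k)) = fun k => -(Bc (ψ₃ k) / A (ψ₃ k)) := by
        funext k; ring
      rw [heq]
      exact this
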